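/- Let B be a symmetric real d×d matrix with λ_max(B) < 0, let A ∈ M_d(ℝ), and let ν be a (Lévy) measure on ℝ^d such that ∫ ‖A ⊗ A‖₂ ‖vec(y yᵀ)‖₂ dν(y) + 2 λ_max(B) < 0. Then every eigenvalue of the matrix (B ⊗ I) + (I ⊗ B) + (A ⊗ A) ∫ y yᵀ dν(y) (viewed appropriately as acting on ℝ^{d²}) has negative real part. -/

import Mathlib

open Matrix MeasureTheory ProbabilityTheory Kronecker
noncomputable section

/-- Spectral (operator 2-) norm of a real matrix. -/
def specNorm {n : Type*} [Fintype n] [DecidableEq n] (M : Matrix n n ℝ) : ℝ :=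
  ‖Matrix.toEuclideanCLM (𝕜 := ℝ) M‖

/-- Frobenius norm of a real square matrix. -/
def frobNorm {n : Type*} [Fintype n] (M : Matrix n n ℝ) : ℝ :=
  Real.sqrt ((M * Mᵀ).trace)

/-- Euclidean norm of a finitely indexed real vector. -/
def eNorm {ι : Type*} [Fintype ι] (x : ι → ℝ) : ℝ :=
  Real.sqrt (∑ i, x i ^ 2)

/-- The vec operator, stacking the columns of a matrix. -/
def vecOp {d : ℕ} (X : Matrix (Fin d) (Fin d) ℝ) : Fin d × Fin d → ℝ :=
  fun p => X p.2 p.1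

/-- Largest eigenvalue of a Hermitian (symmetric) real matrix. -/
def lamMax {n : Type*} [Fintype n] [DecidableEq n] {M : Matrix n n ℝ}
    (hM : M.IsHermitian) : ℝ := ⨆ i, hM.eigenvalues i

/-- Smallest eigenvalue of a Hermitian (symmetric) real matrix. -/
def lamMin {n : Type*} [Fintype n] [DecidableEq n] {M : Matrix n n ℝ}
    (hM : M.IsHermitian) : ℝ := ⨅ i, hM.eigenvalues i

section Helpers

set_option linter.unusedSectionVars false

variable {n : Type*} [Fintype n] [DecidableEq n]

lemma eig_le_lamMax {M : Matrix n n ℝ} (hM : M.IsHermitian) (i : n) :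
    hM.eigenvalues i ≤ lamMax hM :=
  le_ciSup (Set.Finite.bddAbove (Set.finite_range _)) i

lemma rayleigh_real [Nonempty n] {M : Matrix n n ℝ} (hM : M.IsHermitian) (x : n → ℝ) :
    x ⬝ᵥ M *ᵥ x ≤ lamMax hM * ∑ i, x i ^ 2 := by
  set U := (hM.eigenvectorUnitary : Matrix n n ℝ) with hUdef
  have hstar : star U = Uᵀ := by
    rw [Matrix.star_eq_conjTranspose, Matrix.conjTranspose_eq_transpose_of_trivial]
  have hU1 : U * Uᵀ = 1 := by
    have := (Matrix.mem_unitaryGroup_iff).mp hM.eigenvectorUnitary.2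
    rwa [hstar] at this
  set z := Uᵀ *ᵥ x with hzdef
  have hxU : x ᵥ* U = z := by
    rw [hzdef, ← Matrix.vecMul_transpose, Matrix.transpose_transpose]
  have h1 : x ⬝ᵥ M *ᵥ x = ∑ i, hM.eigenvalues i * z i ^ 2 := by
    conv_lhs => rw [hM.spectral_theorem, Unitary.conjStarAlgAut_apply, hstar]
    rw [← Matrix.mulVec_mulVec, ← Matrix.mulVec_mulVec, Matrix.dotProduct_mulVec, hxU]
    simp [Matrix.mulVec_diagonal, dotProduct, RCLike.ofReal]
    ring_nf
    exact Finset.sum_congr rfl fun i _ => by ring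
  have h2 : ∑ i, z i ^ 2 = ∑ i, x i ^ 2 := by
    have : z ⬝ᵥ z = x ⬝ᵥ x := by
      calc z ⬝ᵥ z = (z ᵥ* Uᵀ) ⬝ᵥ x := by rw [hzdef, ← Matrix.dotProduct_mulVec]
        _ = (U *ᵥ z) ⬝ᵥ x := by rw [Matrix.vecMul_transpose]
        _ = x ⬝ᵥ x := by
            rw [hzdef, Matrix.mulVec_mulVec, hU1, Matrix.one_mulVec]
    simpa [dotProduct, sq] using this
  rw [h1, ← h2, Finset.mul_sum]
  exact Finset.sum_le_sum fun i _ =>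
    mul_le_mul_of_nonneg_right (eig_le_lamMax hM i) (sq_nonneg _)

lemma mapped_mulVec_re (M : Matrix n n ℝ) (w : n → ℂ) (i : n) :
    ((M.map Complex.ofReal *ᵥ w) i).re = (M *ᵥ fun k => (w k).re) i := by
  simp [Matrix.mulVec, dotProduct, Complex.re_sum, Complex.mul_re]

lemma mapped_mulVec_im (M : Matrix n n ℝ) (w : n → ℂ) (i : n) :
    ((M.map Complex.ofReal *ᵥ w) i).im = (M *ᵥ fun k => (w k).im) i := by
  simp [Matrix.mulVec, dotProduct, Complex.im_sum, Complex.mul_im]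

lemma rayleigh_complex [Nonempty n] {M : Matrix n n ℝ} (hM : M.IsHermitian) (w : n → ℂ) :
    (star w ⬝ᵥ (M.map Complex.ofReal) *ᵥ w).re ≤ lamMax hM * ∑ i, Complex.normSq (w i) := by
  set x : n → ℝ := fun i => (w i).re
  set y : n → ℝ := fun i => (w i).im
  have key : (star w ⬝ᵥ (M.map Complex.ofReal) *ᵥ w).re
      = x ⬝ᵥ M *ᵥ x + y ⬝ᵥ M *ᵥ y := by
    rw [dotProduct, Complex.re_sum, dotProduct, dotProduct, ← Finset.sum_add_distrib]
    refine Finset.sum_congr rfl fun i _ => ?_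
    rw [Pi.star_apply, Complex.mul_re, Complex.star_def, Complex.conj_re, Complex.conj_im,
      mapped_mulVec_re, mapped_mulVec_im]
    ring
  have hx := rayleigh_real hM x
  have hy := rayleigh_real hM y
  have hN : ∑ i, Complex.normSq (w i) = (∑ i, x i ^ 2) + ∑ i, y i ^ 2 := by
    rw [← Finset.sum_add_distrib]
    exact Finset.sum_congr rfl fun i _ => by
      simp [Complex.normSq_apply, x, y, sq]
  rw [key, hN, mul_add]
  exact add_le_add hx hy

lemma spec_mulVec_sq_le (R : Matrix n n ℝ) (x : n → ℝ) :
    ∑ i, ((R *ᵥ x) i) ^ 2 ≤ specNorm R ^ 2 * ∑ i, x i ^ 2 := by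
  have h := (Matrix.toEuclideanCLM (𝕜 := ℝ) R).le_opNorm ((WithLp.equiv 2 (n → ℝ)).symm x)
  rw [show (Matrix.toEuclideanCLM (𝕜 := ℝ) R) ((WithLp.equiv 2 (n → ℝ)).symm x)
      = (WithLp.equiv 2 (n → ℝ)).symm (R *ᵥ x) from rfl] at h
  have hn : ∀ z : n → ℝ, ‖(WithLp.equiv 2 (n → ℝ)).symm z‖ = Real.sqrt (∑ i, z i ^ 2) := by
    intro z
    rw [EuclideanSpace.norm_eq]
    congr 1
    exact Finset.sum_congr rfl fun i _ => by simp [Real.norm_eq_abs, sq_abs]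
  rw [hn, hn] at h
  have h0 : (0:ℝ) ≤ specNorm R := norm_nonneg _
  have hA : (0:ℝ) ≤ ∑ i, ((R *ᵥ x) i) ^ 2 := Finset.sum_nonneg fun i _ => sq_nonneg _
  have hB : (0:ℝ) ≤ ∑ i, x i ^ 2 := Finset.sum_nonneg fun i _ => sq_nonneg _
  calc ∑ i, ((R *ᵥ x) i) ^ 2 = Real.sqrt (∑ i, ((R *ᵥ x) i) ^ 2) ^ 2 := (Real.sq_sqrt hA).symm
    _ ≤ (specNorm R * Real.sqrt (∑ i, x i ^ 2)) ^ 2 := by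
        apply pow_le_pow_left₀ (Real.sqrt_nonneg _) h
    _ = specNorm R ^ 2 * ∑ i, x i ^ 2 := by rw [mul_pow, Real.sq_sqrt hB]

lemma spec_mulVec_sq_le_c (R : Matrix n n ℝ) (w : n → ℂ) :
    ∑ i, Complex.normSq ((R.map Complex.ofReal *ᵥ w) i)
      ≤ specNorm R ^ 2 * ∑ i, Complex.normSq (w i) := by
  have h1 : ∑ i, Complex.normSq ((R.map Complex.ofReal *ᵥ w) i)
      = (∑ i, ((R *ᵥ fun k => (w k).re) i) ^ 2) + ∑ i, ((R *ᵥ fun k => (w k).im) i) ^ 2 := by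
    rw [← Finset.sum_add_distrib]
    exact Finset.sum_congr rfl fun i _ => by
      rw [Complex.normSq_apply, mapped_mulVec_re, mapped_mulVec_im]; ring
  have h2 : ∑ i, Complex.normSq (w i) = (∑ i, (w i).re ^ 2) + ∑ i, (w i).im ^ 2 := by
    rw [← Finset.sum_add_distrib]
    exact Finset.sum_congr rfl fun i _ => by simp [Complex.normSq_apply, sq]
  rw [h1, h2, mul_add]
  exact add_le_add (spec_mulVec_sq_le R _) (spec_mulVec_sq_le R _)

lemma frob_mulVec_sq_le (R : Matrix n n ℝ) (u : n → ℂ) :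
    ∑ i, Complex.normSq ((R.map Complex.ofReal *ᵥ u) i)
      ≤ (∑ i, ∑ k, R i k ^ 2) * ∑ k, Complex.normSq (u k) := by
  have key : ∀ i, Complex.normSq ((R.map Complex.ofReal *ᵥ u) i)
      ≤ (∑ k, R i k ^ 2) * ∑ k, Complex.normSq (u k) := by
    intro i
    rw [Complex.normSq_apply, mapped_mulVec_re, mapped_mulVec_im]
    have hre := Finset.sum_mul_sq_le_sq_mul_sq Finset.univ (fun k => R i k) (fun k => (u k).re)
    have him := Finset.sum_mul_sq_le_sq_mul_sq Finset.univ (fun k => R i k) (fun k => (u k).im)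
    have hsplit : ∑ k, Complex.normSq (u k) = (∑ k, (u k).re ^ 2) + ∑ k, (u k).im ^ 2 := by
      rw [← Finset.sum_add_distrib]
      exact Finset.sum_congr rfl fun k _ => by simp [Complex.normSq_apply, sq]
    rw [hsplit, Matrix.mulVec, Matrix.mulVec]
    simp only [dotProduct]
    nlinarith [hre, him]
  calc ∑ i, Complex.normSq ((R.map Complex.ofReal *ᵥ u) i)
      ≤ ∑ i, (∑ k, R i k ^ 2) * ∑ k, Complex.normSq (u k) := Finset.sum_le_sum fun i _ => key i
    _ = (∑ i, ∑ k, R i k ^ 2) * ∑ k, Complex.normSq (u k) := by rw [Finset.sum_mul]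

lemma abs_dot_le (a b : n → ℂ) :
    ‖star a ⬝ᵥ b‖
      ≤ Real.sqrt (∑ i, Complex.normSq (a i)) * Real.sqrt (∑ i, Complex.normSq (b i)) := by
  calc ‖star a ⬝ᵥ b‖ ≤ ∑ i, ‖star a i * b i‖ :=
        norm_sum_le _ _
    _ = ∑ i, ‖a i‖ * ‖b i‖ := by
        exact Finset.sum_congr rfl fun i _ => by
          simp [_root_.map_mul, Complex.norm_conj]
    _ ≤ Real.sqrt (∑ i, ‖a i‖ ^ 2) * Real.sqrt (∑ i, ‖b i‖ ^ 2) :=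
        Real.sum_mul_le_sqrt_mul_sqrt _ _ _
    _ = _ := by
        have h : ∀ c : n → ℂ, ∑ i, ‖c i‖ ^ 2 = ∑ i, Complex.normSq (c i) :=
          fun c => Finset.sum_congr rfl fun i _ => Complex.sq_norm _
        rw [h, h]

lemma kron_left_slice (R : Matrix n n ℝ) (v : n × n → ℂ) (p : n × n) :
    ((R ⊗ₖ (1 : Matrix n n ℝ)).map Complex.ofReal *ᵥ v) p
      = (R.map Complex.ofReal *ᵥ fun k => v (k, p.2)) p.1 := by
  simp [Matrix.mulVec, dotProduct, Fintype.sum_prod_type, Matrix.kroneckerMap_apply,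
    Matrix.one_apply, apply_ite Complex.ofReal, ite_mul, mul_ite]

lemma kron_right_slice (R : Matrix n n ℝ) (v : n × n → ℂ) (p : n × n) :
    (((1 : Matrix n n ℝ) ⊗ₖ R).map Complex.ofReal *ᵥ v) p
      = (R.map Complex.ofReal *ᵥ fun l => v (p.1, l)) p.2 := by
  simp [Matrix.mulVec, dotProduct, Fintype.sum_prod_type, Matrix.kroneckerMap_apply,
    Matrix.one_apply, apply_ite Complex.ofReal, ite_mul, mul_ite]

lemma dot_kron_left (R : Matrix n n ℝ) (v : n × n → ℂ) :
    star v ⬝ᵥ ((R ⊗ₖ (1 : Matrix n n ℝ)).map Complex.ofReal *ᵥ v)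
      = ∑ j, star (fun k => v (k, j)) ⬝ᵥ (R.map Complex.ofReal *ᵥ fun k => v (k, j)) := by
  rw [dotProduct]
  rw [Finset.sum_congr rfl fun p _ => by rw [kron_left_slice]]
  rw [Fintype.sum_prod_type, Finset.sum_comm]
  exact Finset.sum_congr rfl fun j _ => by rw [dotProduct]; rfl

lemma dot_kron_right (R : Matrix n n ℝ) (v : n × n → ℂ) :
    star v ⬝ᵥ (((1 : Matrix n n ℝ) ⊗ₖ R).map Complex.ofReal *ᵥ v)
      = ∑ i, star (fun l => v (i, l)) ⬝ᵥ (R.map Complex.ofReal *ᵥ fun l => v (i, l)) := by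
  rw [dotProduct]
  rw [Finset.sum_congr rfl fun p _ => by rw [kron_right_slice]]
  rw [Fintype.sum_prod_type]
  exact Finset.sum_congr rfl fun i _ => by rw [dotProduct]; rfl

end Helpers

/-- under the integrated drift condition, all eigenvalues of
`(B ⊗ I) + (I ⊗ B) + (A ⊗ A) ∫ y yᵀ dν(y)` have negative real part. -/
theorem eigenvalues_neg_real_part_of_drift_condition (d : ℕ)
    (B A : Matrix (Fin d) (Fin d) ℝ) (hB : B.IsHermitian) (hBneg : lamMax hB < 0)
    (ν : Measure (Fin d → ℝ))
    (hmom : ∀ i j, Integrable (fun y => y i * y j) ν)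
    (hint : Integrable (fun y => specNorm (A ⊗ₖ A) * eNorm (vecOp (vecMulVec y y))) ν)
    (hcond : (∫ y, specNorm (A ⊗ₖ A) * eNorm (vecOp (vecMulVec y y)) ∂ν)
        + 2 * lamMax hB < 0) :
    ∀ μ ∈ spectrum ℂ
      (((B ⊗ₖ (1 : Matrix (Fin d) (Fin d) ℝ) + (1 : Matrix (Fin d) (Fin d) ℝ) ⊗ₖ B)
        + (A ⊗ₖ A) * ((Matrix.of fun i j => ∫ y, y i * y j ∂ν)
            ⊗ₖ (1 : Matrix (Fin d) (Fin d) ℝ))).map Complex.ofReal),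
      μ.re < 0 := by
  intro μ hμ
  classical
  have hd : Nonempty (Fin d) := by
    by_contra h
    rw [not_nonempty_iff] at h
    have h0 : lamMax hB = 0 := Real.iSup_of_isEmpty _
    rw [h0] at hBneg
    exact lt_irrefl 0 hBneg
  set C : Matrix (Fin d) (Fin d) ℝ := Matrix.of fun i j => ∫ y, y i * y j ∂ν with hCdef
  set Mc := ((B ⊗ₖ (1 : Matrix (Fin d) (Fin d) ℝ) + (1 : Matrix (Fin d) (Fin d) ℝ) ⊗ₖ B)
        + (A ⊗ₖ A) * (C ⊗ₖ (1 : Matrix (Fin d) (Fin d) ℝ))).map Complex.ofReal with hMcdef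
  -- obtain an eigenvector
  rw [← AlgEquiv.spectrum_eq (Matrix.toLinAlgEquiv' (R := ℂ) (n := Fin d × Fin d)) Mc] at hμ
  have hev : Module.End.HasEigenvalue (Matrix.toLinAlgEquiv' Mc) μ :=
    Module.End.hasEigenvalue_iff_mem_spectrum.mpr hμ
  obtain ⟨v, hv⟩ := hev.exists_hasEigenvector
  have heig : Mc *ᵥ v = μ • v := by
    have h := hv.apply_eq_smul
    rwa [Matrix.toLinAlgEquiv'_apply] at h
  have hv0 : v ≠ 0 := hv.right
  set N := ∑ p, Complex.normSq (v p) with hNdef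
  have hNpos : 0 < N := by
    obtain ⟨p, hp⟩ := Function.ne_iff.mp hv0
    exact Finset.sum_pos' (fun q _ => Complex.normSq_nonneg _)
      ⟨p, Finset.mem_univ p, Complex.normSq_pos.mpr hp⟩
  have hNnn : (0:ℝ) ≤ N := hNpos.le
  have hdot : (star v ⬝ᵥ Mc *ᵥ v).re = μ.re * N := by
    rw [heig]
    have h1 : star v ⬝ᵥ (μ • v) = μ * (N : ℂ) := by
      simp only [dotProduct, Pi.smul_apply, Pi.star_apply, smul_eq_mul]
      rw [hNdef]
      push_cast
      rw [Finset.mul_sum]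
      refine Finset.sum_congr rfl fun p _ => ?_
      rw [show star (v p) * (μ * v p) = μ * (v p * star (v p)) by ring, Complex.star_def,
        Complex.mul_conj]
    rw [h1]
    simp [Complex.mul_re]
  have hsplit : Mc = (B ⊗ₖ (1 : Matrix (Fin d) (Fin d) ℝ)).map Complex.ofReal
      + ((1 : Matrix (Fin d) (Fin d) ℝ) ⊗ₖ B).map Complex.ofReal
      + (A ⊗ₖ A).map Complex.ofReal * (C ⊗ₖ (1 : Matrix (Fin d) (Fin d) ℝ)).map Complex.ofReal := by
    rw [hMcdef]
    ext p q
    simp only [Matrix.map_apply, Matrix.add_apply, Matrix.mul_apply]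
    push_cast
    ring
  have hdecomp : (star v ⬝ᵥ Mc *ᵥ v).re
      = (star v ⬝ᵥ ((B ⊗ₖ (1 : Matrix (Fin d) (Fin d) ℝ)).map Complex.ofReal *ᵥ v)).re
        + (star v ⬝ᵥ (((1 : Matrix (Fin d) (Fin d) ℝ) ⊗ₖ B).map Complex.ofReal *ᵥ v)).re
        + (star v ⬝ᵥ ((A ⊗ₖ A).map Complex.ofReal *ᵥ
            ((C ⊗ₖ (1 : Matrix (Fin d) (Fin d) ℝ)).map Complex.ofReal *ᵥ v))).re := by
    rw [hsplit, Matrix.add_mulVec, Matrix.add_mulVec, ← Matrix.mulVec_mulVec,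
      dotProduct_add, dotProduct_add, Complex.add_re, Complex.add_re]
  -- the two symmetric terms
  have hT1 : (star v ⬝ᵥ ((B ⊗ₖ (1 : Matrix (Fin d) (Fin d) ℝ)).map Complex.ofReal *ᵥ v)).re
      ≤ lamMax hB * N := by
    rw [dot_kron_left, Complex.re_sum]
    calc ∑ j, (star (fun k => v (k, j)) ⬝ᵥ (B.map Complex.ofReal *ᵥ fun k => v (k, j))).re
        ≤ ∑ j, lamMax hB * ∑ i, Complex.normSq (v (i, j)) :=
          Finset.sum_le_sum fun j _ => rayleigh_complex hB _
      _ = lamMax hB * N := by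
          rw [← Finset.mul_sum, hNdef, Fintype.sum_prod_type, Finset.sum_comm]
  have hT2 : (star v ⬝ᵥ (((1 : Matrix (Fin d) (Fin d) ℝ) ⊗ₖ B).map Complex.ofReal *ᵥ v)).re
      ≤ lamMax hB * N := by
    rw [dot_kron_right, Complex.re_sum]
    calc ∑ i, (star (fun l => v (i, l)) ⬝ᵥ (B.map Complex.ofReal *ᵥ fun l => v (i, l))).re
        ≤ ∑ i, lamMax hB * ∑ l, Complex.normSq (v (i, l)) :=
          Finset.sum_le_sum fun i _ => rayleigh_complex hB _
      _ = lamMax hB * N := by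
          rw [← Finset.mul_sum, hNdef, Fintype.sum_prod_type]
  -- the perturbation term
  set s := specNorm (A ⊗ₖ A) with hsdef
  have hs0 : (0:ℝ) ≤ s := norm_nonneg _
  set u := (C ⊗ₖ (1 : Matrix (Fin d) (Fin d) ℝ)).map Complex.ofReal *ᵥ v with hudef
  set F2 := ∑ i, ∑ k, C i k ^ 2 with hF2def
  have hF2nn : (0:ℝ) ≤ F2 :=
    Finset.sum_nonneg fun i _ => Finset.sum_nonneg fun k _ => sq_nonneg _
  have huN : ∑ p, Complex.normSq (u p) ≤ F2 * N := by
    calc ∑ p, Complex.normSq (u p)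
        = ∑ j, ∑ i, Complex.normSq ((C.map Complex.ofReal *ᵥ fun k => v (k, j)) i) := by
          rw [Finset.sum_congr rfl fun p _ => by rw [hudef, kron_left_slice]]
          rw [Fintype.sum_prod_type, Finset.sum_comm]
      _ ≤ ∑ j, F2 * ∑ i, Complex.normSq (v (i, j)) :=
          Finset.sum_le_sum fun j _ => frob_mulVec_sq_le C _
      _ = F2 * N := by rw [← Finset.mul_sum, hNdef, Fintype.sum_prod_type, Finset.sum_comm]
  have hTE : (star v ⬝ᵥ ((A ⊗ₖ A).map Complex.ofReal *ᵥ u)).re ≤ s * Real.sqrt F2 * N := by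
    set t := (A ⊗ₖ A).map Complex.ofReal *ᵥ u with htdef
    have h1 : (star v ⬝ᵥ t).re ≤ ‖star v ⬝ᵥ t‖ := Complex.re_le_norm _
    have h2 := abs_dot_le v t
    have h3 : Real.sqrt (∑ p, Complex.normSq (t p))
        ≤ s * Real.sqrt (∑ p, Complex.normSq (u p)) := by
      have hh := spec_mulVec_sq_le_c (A ⊗ₖ A) u
      calc Real.sqrt (∑ p, Complex.normSq (t p))
          ≤ Real.sqrt (s ^ 2 * ∑ p, Complex.normSq (u p)) := Real.sqrt_le_sqrt hh
        _ = s * Real.sqrt (∑ p, Complex.normSq (u p)) := by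
            rw [Real.sqrt_mul (sq_nonneg s), Real.sqrt_sq hs0]
    have h4 : Real.sqrt (∑ p, Complex.normSq (u p)) ≤ Real.sqrt F2 * Real.sqrt N := by
      calc Real.sqrt (∑ p, Complex.normSq (u p)) ≤ Real.sqrt (F2 * N) := Real.sqrt_le_sqrt huN
        _ = Real.sqrt F2 * Real.sqrt N := Real.sqrt_mul hF2nn N
    have h5 : Real.sqrt (∑ p, Complex.normSq (v p)) = Real.sqrt N := by rw [hNdef]
    have h6 : ‖star v ⬝ᵥ t‖ ≤ Real.sqrt N * (s * (Real.sqrt F2 * Real.sqrt N)) := by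
      refine le_trans h2 ?_
      rw [h5]
      exact mul_le_mul_of_nonneg_left
        (le_trans h3 (mul_le_mul_of_nonneg_left h4 hs0)) (Real.sqrt_nonneg _)
    have heq : Real.sqrt N * (s * (Real.sqrt F2 * Real.sqrt N)) = s * Real.sqrt F2 * N := by
      rw [show Real.sqrt N * (s * (Real.sqrt F2 * Real.sqrt N))
        = s * Real.sqrt F2 * (Real.sqrt N * Real.sqrt N) by ring, Real.mul_self_sqrt hNnn]
    linarith
  -- bound s * √F2 by the integral
  set K := ∫ y, s * eNorm (vecOp (vecMulVec y y)) ∂ν with hKdef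
  set c := ∫ y, eNorm (vecOp (vecMulVec y y)) ∂ν with hcdef
  have hKsc : K = s * c := by rw [hKdef, hcdef, integral_const_mul]
  have hc0 : (0:ℝ) ≤ c := by
    rw [hcdef]
    exact integral_nonneg fun y => by unfold eNorm; positivity
  have hsF2K : s * Real.sqrt F2 ≤ K := by
    rcases eq_or_lt_of_le hs0 with hseq | hspos
    · rw [hKsc, ← hseq]; simp
    · have hene : Integrable (fun y => eNorm (vecOp (vecMulVec y y))) ν := by
        have h := hint.const_mul s⁻¹
        have heqf : (fun y : Fin d → ℝ => s⁻¹ * (s * eNorm (vecOp (vecMulVec y y))))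
            = fun y : Fin d → ℝ => eNorm (vecOp (vecMulVec y y)) := by
          funext y; field_simp
        rwa [heqf] at h
      have hintegr1 : Integrable (fun y => ∑ p : Fin d × Fin d, C p.1 p.2 * (y p.1 * y p.2)) ν :=
        integrable_finset_sum _ fun p _ => (hmom p.1 p.2).const_mul _
      have hpt : ∀ y : Fin d → ℝ, ∑ p : Fin d × Fin d, C p.1 p.2 * (y p.1 * y p.2)
          ≤ Real.sqrt F2 * eNorm (vecOp (vecMulVec y y)) := by
        intro y
        have hcs := Real.sum_mul_le_sqrt_mul_sqrt Finset.univ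
          (fun p : Fin d × Fin d => C p.1 p.2) (fun p => y p.1 * y p.2)
        have he : eNorm (vecOp (vecMulVec y y))
            = Real.sqrt (∑ p : Fin d × Fin d, (y p.1 * y p.2) ^ 2) := by
          unfold eNorm vecOp
          congr 1
          refine Finset.sum_congr rfl fun p _ => ?_
          rw [Matrix.vecMulVec_apply, mul_comm]
        have hF2' : Real.sqrt (∑ p : Fin d × Fin d, (C p.1 p.2) ^ 2) = Real.sqrt F2 := by
          rw [hF2def, Fintype.sum_prod_type]
        rw [he, ← hF2']
        exact hcs
      have hF2eq : F2 = ∫ y, ∑ p : Fin d × Fin d, C p.1 p.2 * (y p.1 * y p.2) ∂ν := by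
        rw [integral_finset_sum _ fun p _ => (hmom p.1 p.2).const_mul _, hF2def,
          Fintype.sum_prod_type]
        refine Finset.sum_congr rfl fun i _ => Finset.sum_congr rfl fun k _ => ?_
        rw [integral_const_mul, sq]
        rfl
      have hle : F2 ≤ Real.sqrt F2 * c := by
        have hmono : ∫ y, ∑ p : Fin d × Fin d, C p.1 p.2 * (y p.1 * y p.2) ∂ν
            ≤ ∫ y, Real.sqrt F2 * eNorm (vecOp (vecMulVec y y)) ∂ν :=
          integral_mono hintegr1 (hene.const_mul _) hpt
        rw [integral_const_mul, ← hcdef] at hmono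
        calc F2 = ∫ y, ∑ p : Fin d × Fin d, C p.1 p.2 * (y p.1 * y p.2) ∂ν := hF2eq
          _ ≤ Real.sqrt F2 * c := hmono
      have hsqrtF2 : Real.sqrt F2 ≤ c := by
        rcases eq_or_lt_of_le (Real.sqrt_nonneg F2) with h0 | h0
        · rw [← h0]; exact hc0
        · nlinarith [Real.sq_sqrt hF2nn]
      rw [hKsc]
      exact mul_le_mul_of_nonneg_left hsqrtF2 hs0
  -- assemble
  have hmain : μ.re * N ≤ (K + 2 * lamMax hB) * N := by
    calc μ.re * N
        = (star v ⬝ᵥ ((B ⊗ₖ (1 : Matrix (Fin d) (Fin d) ℝ)).map Complex.ofReal *ᵥ v)).re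
          + (star v ⬝ᵥ (((1 : Matrix (Fin d) (Fin d) ℝ) ⊗ₖ B).map Complex.ofReal *ᵥ v)).re
          + (star v ⬝ᵥ ((A ⊗ₖ A).map Complex.ofReal *ᵥ u)).re := by
          rw [← hdot, hdecomp, hudef]
      _ ≤ lamMax hB * N + lamMax hB * N + s * Real.sqrt F2 * N :=
          add_le_add (add_le_add hT1 hT2) hTE
      _ ≤ (K + 2 * lamMax hB) * N := by nlinarith [hsF2K, hNnn]
  have hfin : μ.re * N < 0 := lt_of_le_of_lt hmain (mul_neg_of_neg_of_pos hcond hNpos)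
  by_contra hcon
  push_neg at hcon
  nlinarith [mul_nonneg hcon hNnn]
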